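/- For every natural number m and every complex number s with s ∉ {−1, −2, 2m, 2m+1}, one has s·(s+1)·( ∏_{j=1}^{2m} (s−j) )·ζ(s+2)·ζ(2m+1−s) = (−1)^(m+1)·(4π²)^(m+1)·ζ(s−2m)·ζ(−1−s), where the product ∏_{j=1}^{2m}(s−j) = (s−1)(s−2)⋯(s−2m) (an empty product equal to 1 when m = 0). -/

import Mathlib

open Complex Finset

private lemma zeta_neg_even {n : ℕ} (hn : n ≠ 0) : riemannZeta (-(2 * n) : ℂ) = 0 := by
  obtain ⟨k, rfl⟩ := Nat.exists_eq_succ_of_ne_zero hn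
  have h := riemannZeta_neg_two_mul_nat_add_one k
  rw [show (-2 * ((k : ℂ) + 1)) = (-(2 * ((k + 1 : ℕ) : ℂ))) by push_cast; ring] at h
  exact h

private lemma auxGR (w : ℂ) (hw : Gammaℝ w ≠ 0) (n : ℕ) :
    (2 * (Real.pi : ℂ)) ^ n * Gammaℝ (w + 2 * n) =
      Gammaℝ w * ∏ k ∈ range n, (w + 2 * (k : ℂ)) := by
  induction n with
  | zero => simp
  | succ n ih =>
    have hπ : (Real.pi : ℂ) ≠ 0 := ofReal_ne_zero.mpr Real.pi_ne_zero
    have hwn : w + 2 * (n : ℂ) ≠ 0 := by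
      intro h
      exact hw (Gammaℝ_eq_zero_iff.mpr ⟨n, by linear_combination h⟩)
    have h2 : w + 2 * ((n + 1 : ℕ) : ℂ) = (w + 2 * (n : ℂ)) + 2 := by push_cast; ring
    rw [h2, Gammaℝ_add_two hwn, prod_range_succ, pow_succ]
    field_simp
    linear_combination ih

private lemma prodid (s : ℂ) (m : ℕ) :
    (-1 : ℂ) ^ (m + 1) * ((∏ k ∈ range (m + 1), (s - 2 * (m : ℂ) + 2 * (k : ℂ))) *
        (∏ k ∈ range (m + 1), (-1 - s + 2 * (k : ℂ)))) =
      s * (s + 1) * ∏ j ∈ Finset.Icc 1 (2 * m), (s - (j : ℂ)) := by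
  induction m with
  | zero => simp; ring
  | succ m ih =>
    have h1 : (∏ k ∈ range (m + 2), (s - 2 * ((m + 1 : ℕ) : ℂ) + 2 * (k : ℂ))) =
        (∏ k ∈ range (m + 1), (s - 2 * (m : ℂ) + 2 * (k : ℂ))) * (s - 2 * (m : ℂ) - 2) := by
      rw [prod_range_succ']
      congr 1
      · exact prod_congr rfl fun k _ => by push_cast; ring
      · push_cast; ring
    have h2 : (∏ k ∈ range (m + 2), (-1 - s + 2 * (k : ℂ))) =
        (∏ k ∈ range (m + 1), (-1 - s + 2 * (k : ℂ))) * (2 * (m : ℂ) + 1 - s) := by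
      rw [prod_range_succ]
      congr 1
      push_cast; ring
    have h3 : (∏ j ∈ Finset.Icc 1 (2 * (m + 1)), (s - (j : ℂ))) =
        (∏ j ∈ Finset.Icc 1 (2 * m), (s - (j : ℂ))) * (s - (2 * (m : ℂ) + 1)) *
          (s - (2 * (m : ℂ) + 2)) := by
      rw [show 2 * (m + 1) = (2 * m + 1) + 1 by ring,
        Finset.prod_Icc_succ_top (by omega), Finset.prod_Icc_succ_top (by omega)]
      push_cast; ring
    rw [h1, h2, h3]
    linear_combination ((-1 : ℂ) * (s - 2 * (m : ℂ) - 2) * (2 * (m : ℂ) + 1 - s)) * ih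

theorem stmt_15 (m : ℕ) (s : ℂ)
    (hs : s ∉ ({-1, -2, 2 * (m : ℂ), 2 * (m : ℂ) + 1} : Set ℂ)) :
    s * (s + 1) * (∏ j ∈ Finset.Icc 1 (2 * m), (s - (j : ℂ))) *
        riemannZeta (s + 2) * riemannZeta (2 * (m : ℂ) + 1 - s) =
      (-1) ^ (m + 1) * (4 * (Real.pi : ℂ) ^ 2) ^ (m + 1) *
        riemannZeta (s - 2 * (m : ℂ)) * riemannZeta (-1 - s) := by
  simp only [Set.mem_insert_iff, Set.mem_singleton_iff, not_or] at hs
  obtain ⟨hm1, hm2, h2m, h2m1⟩ := hs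
  by_cases hA : Gammaℝ (s + 2) = 0
  · rw [Gammaℝ_eq_zero_iff] at hA
    obtain ⟨n, hn⟩ := hA
    have hn0 : n ≠ 0 := by
      rintro rfl
      exact hm2 (by push_cast at hn; linear_combination hn)
    have z1 : riemannZeta (s + 2) = 0 := by rw [hn]; exact zeta_neg_even hn0
    have z2 : riemannZeta (s - 2 * (m : ℂ)) = 0 := by
      rw [show s - 2 * (m : ℂ) = (-(2 * ((n + m + 1 : ℕ) : ℂ))) by push_cast; linear_combination hn]
      exact zeta_neg_even (by omega)
    rw [z1, z2]; ring
  by_cases hB : Gammaℝ (-1 - s) = 0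
  · rw [Gammaℝ_eq_zero_iff] at hB
    obtain ⟨n, hn⟩ := hB
    have hn0 : n ≠ 0 := by
      rintro rfl
      exact hm1 (by push_cast at hn; linear_combination -hn)
    have z1 : riemannZeta (-1 - s) = 0 := by rw [hn]; exact zeta_neg_even hn0
    rcases le_or_gt n m with hle | hlt
    · have hz : (∏ j ∈ Finset.Icc 1 (2 * m), (s - (j : ℂ))) = 0 := by
        refine Finset.prod_eq_zero (i := 2 * n - 1) (Finset.mem_Icc.mpr ⟨by omega, by omega⟩) ?_
        rw [Nat.cast_sub (by omega)]
        push_cast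
        linear_combination -hn
      rw [hz, z1]; ring
    · have hge : m + 2 ≤ n := by
        rcases Nat.lt_or_ge n (m + 2) with h | h
        · exfalso
          have hn1 : n = m + 1 := by omega
          subst hn1
          exact h2m1 (by push_cast at hn; linear_combination -hn)
        · exact h
      have z2 : riemannZeta (2 * (m : ℂ) + 1 - s) = 0 := by
        rw [show 2 * (m : ℂ) + 1 - s = (-(2 * ((n - m - 1 : ℕ) : ℂ))) by
          rw [Nat.cast_sub (by omega), Nat.cast_sub (by omega)]; push_cast; linear_combination hn]
        exact zeta_neg_even (by omega)
      rw [z1, z2]; ring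
  by_cases hC : Gammaℝ (s - 2 * (m : ℂ)) = 0
  · rw [Gammaℝ_eq_zero_iff] at hC
    obtain ⟨n, hn⟩ := hC
    have hn0 : n ≠ 0 := by
      rintro rfl
      exact h2m (by push_cast at hn; linear_combination hn)
    have z1 : riemannZeta (s - 2 * (m : ℂ)) = 0 := by rw [hn]; exact zeta_neg_even hn0
    rw [z1]
    rcases Nat.lt_or_ge n m with hlt | hge
    · have hz : (∏ j ∈ Finset.Icc 1 (2 * m), (s - (j : ℂ))) = 0 := by
        refine Finset.prod_eq_zero (i := 2 * (m - n)) (Finset.mem_Icc.mpr ⟨by omega, by omega⟩) ?_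
        rw [Nat.cast_mul, Nat.cast_sub (by omega)]
        push_cast
        linear_combination hn
      rw [hz]; ring
    rcases Nat.eq_or_lt_of_le hge with heq | hlt2
    · have hs0 : s = 0 := by subst heq; linear_combination hn
      rw [hs0]; ring
    · have hge2 : m + 2 ≤ n := by
        rcases Nat.lt_or_ge n (m + 2) with h | h
        · exfalso
          have hn1 : n = m + 1 := by omega
          subst hn1
          exact hm2 (by push_cast at hn; linear_combination hn)
        · exact h
      have z2 : riemannZeta (s + 2) = 0 := by
        rw [show s + 2 = (-(2 * ((n - m - 1 : ℕ) : ℂ))) by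
          rw [Nat.cast_sub (by omega), Nat.cast_sub (by omega)]; push_cast; linear_combination hn]
        exact zeta_neg_even (by omega)
      rw [z2]; ring
  by_cases hD : Gammaℝ (2 * (m : ℂ) + 1 - s) = 0
  · rw [Gammaℝ_eq_zero_iff] at hD
    obtain ⟨n, hn⟩ := hD
    have hn0 : n ≠ 0 := by
      rintro rfl
      exact h2m1 (by push_cast at hn; linear_combination -hn)
    have z1 : riemannZeta (2 * (m : ℂ) + 1 - s) = 0 := by rw [hn]; exact zeta_neg_even hn0
    have z2 : riemannZeta (-1 - s) = 0 := by
      rw [show -1 - s = (-(2 * ((n + m + 1 : ℕ) : ℂ))) by push_cast; linear_combination hn]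
      exact zeta_neg_even (by omega)
    rw [z1, z2]; ring
  -- main case
  have ne0 : ∀ w : ℂ, Gammaℝ w ≠ 0 → w ≠ 0 := by
    intro w hw h0
    exact hw (by rw [h0]; exact Gammaℝ_eq_zero_iff.mpr ⟨0, by simp⟩)
  have E1 : riemannZeta (s + 2) * Gammaℝ (s + 2) = riemannZeta (-1 - s) * Gammaℝ (-1 - s) := by
    rw [riemannZeta_def_of_ne_zero (ne0 _ hA), riemannZeta_def_of_ne_zero (ne0 _ hB),
      div_mul_cancel₀ _ hA, div_mul_cancel₀ _ hB,
      show (-1 - s) = 1 - (s + 2) by ring, completedRiemannZeta_one_sub]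
  have E2 : riemannZeta (2 * (m : ℂ) + 1 - s) * Gammaℝ (2 * (m : ℂ) + 1 - s) =
      riemannZeta (s - 2 * (m : ℂ)) * Gammaℝ (s - 2 * (m : ℂ)) := by
    rw [riemannZeta_def_of_ne_zero (ne0 _ hD), riemannZeta_def_of_ne_zero (ne0 _ hC),
      div_mul_cancel₀ _ hD, div_mul_cancel₀ _ hC,
      show (s - 2 * (m : ℂ)) = 1 - (2 * (m : ℂ) + 1 - s) by ring, completedRiemannZeta_one_sub]
  have K1 := auxGR (s - 2 * (m : ℂ)) hC (m + 1)
  rw [show s - 2 * (m : ℂ) + 2 * ((m + 1 : ℕ) : ℂ) = s + 2 by push_cast; ring] at K1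
  have K2 := auxGR (-1 - s) hB (m + 1)
  rw [show -1 - s + 2 * ((m + 1 : ℕ) : ℂ) = 2 * (m : ℂ) + 1 - s by push_cast; ring] at K2
  have PQ := prodid s m
  have hX : (4 * (Real.pi : ℂ) ^ 2) ^ (m + 1) =
      (2 * (Real.pi : ℂ)) ^ (m + 1) * (2 * (Real.pi : ℂ)) ^ (m + 1) := by
    rw [← mul_pow]; ring_nf
  have star : s * (s + 1) * (∏ j ∈ Finset.Icc 1 (2 * m), (s - (j : ℂ))) *
      (Gammaℝ (-1 - s) * Gammaℝ (s - 2 * (m : ℂ))) =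
      (-1) ^ (m + 1) * (4 * (Real.pi : ℂ) ^ 2) ^ (m + 1) *
        (Gammaℝ (s + 2) * Gammaℝ (2 * (m : ℂ) + 1 - s)) := by
    rw [hX, ← PQ]
    linear_combination (-((-1 : ℂ) ^ (m + 1)) * (2 * (Real.pi : ℂ)) ^ (m + 1) *
        Gammaℝ (2 * (m : ℂ) + 1 - s)) * K1 +
      (-((-1 : ℂ) ^ (m + 1)) * Gammaℝ (s - 2 * (m : ℂ)) *
        (∏ k ∈ range (m + 1), (s - 2 * (m : ℂ) + 2 * (k : ℂ)))) * K2
  have hc : Gammaℝ (s + 2) * Gammaℝ (2 * (m : ℂ) + 1 - s) ≠ 0 := mul_ne_zero hA hD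
  apply mul_right_cancel₀ hc
  linear_combination (s * (s + 1) * (∏ j ∈ Finset.Icc 1 (2 * m), (s - (j : ℂ))) *
      riemannZeta (2 * (m : ℂ) + 1 - s) * Gammaℝ (2 * (m : ℂ) + 1 - s)) * E1 +
    (s * (s + 1) * (∏ j ∈ Finset.Icc 1 (2 * m), (s - (j : ℂ))) *
      riemannZeta (-1 - s) * Gammaℝ (-1 - s)) * E2 +
    (riemannZeta (s - 2 * (m : ℂ)) * riemannZeta (-1 - s)) * star
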